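/- arXiv:2604.14381 — 3 statements merged into one kernel-verified Lean document; each statement's English description precedes it below -/
import Mathlib

section
/- Let n ≥ 2 and let K_n be the complete graph on n vertices. Then the Fair Cut Cover value satisfies η̄(K_n) = n/(2(n-1)) if n is even, and η̄(K_n) = (n+1)/(2n) if n is odd; moreover this optimal value is attained by the uniform distribution over indicator cuts of k-element subsets with k = n/2 (n even) or k = (n±1)/2 (n odd). -/
/-- The Fair Cut Cover value `η̄(K)` of a graph `K`: the supremum over cut
distributions `p` of the minimum edge cut probability (encoded as the supremum
of all `t` such that some cut distribution has every edge cut probability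
at least `t`). -/
noncomputable def fairCutCover {W : Type} [Fintype W] [DecidableEq W]
    (K : SimpleGraph W) : ℝ :=
  sSup {t : ℝ | ∃ p : (W → ℤˣ) → ℝ, (∀ x, 0 ≤ p x) ∧ (∑ x, p x = 1) ∧
    ∀ u v, K.Adj u v → t ≤ ∑ x, p x * (if x u ≠ x v then (1 : ℝ) else 0)}

/-- The uniform distribution over indicator cuts of `k`-element subsets of
`Fin n`: the indicator cut of `S` sends `i` to `1` if `i ∈ S` and to `-1`
otherwise. -/
noncomputable def kSubsetCutDist (n k : ℕ) : (Fin n → ℤˣ) → ℝ :=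
  fun x =>
    ((Finset.univ.filter fun S : Finset (Fin n) =>
        S.card = k ∧ ∀ a, x a = if a ∈ S then 1 else -1).card : ℝ) /
      (n.choose k : ℝ)

section Aux

open Finset

/-- Cuts on `Fin n` correspond to subsets of `Fin n`. -/
def cutEquiv (n : ℕ) : (Fin n → ℤˣ) ≃ Finset (Fin n) where
  toFun x := Finset.univ.filter (fun a => x a = 1)
  invFun S := fun a => if a ∈ S then 1 else -1
  left_inv x := by
    funext a
    rcases Int.units_eq_one_or (x a) with h | h <;> simp [h]
  right_inv S := by
    ext a
    by_cases h : a ∈ S <;> simp [h]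

lemma kdist_symm (n k : ℕ) (S : Finset (Fin n)) :
    kSubsetCutDist n k ((cutEquiv n).symm S) =
      (if S.card = k then (1:ℝ) else 0) / (n.choose k : ℝ) := by
  have hfil : (Finset.univ.filter fun S' : Finset (Fin n) =>
      S'.card = k ∧ ∀ a, (cutEquiv n).symm S a = if a ∈ S' then 1 else -1)
      = if S.card = k then {S} else ∅ := by
    ext S'
    rw [Finset.mem_filter]
    simp only [cutEquiv, Equiv.coe_fn_symm_mk, mem_filter, mem_univ, true_and]
    constructor
    · rintro ⟨hc, h⟩
      have hSS : S' = S := by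
        ext a
        have ha := h a
        by_cases haS : a ∈ S <;> by_cases haS' : a ∈ S' <;>
          simp [haS, haS'] at ha ⊢
      subst hSS
      simp [hc]
    · intro h
      by_cases hc : S.card = k
      · simp [hc] at h
        subst h
        exact ⟨hc, fun a => rfl⟩
      · simp [hc] at h
  rw [kSubsetCutDist, hfil]
  by_cases hc : S.card = k <;> simp [hc]

lemma ind_symm (n : ℕ) (S : Finset (Fin n)) (i j : Fin n) :
    (if (cutEquiv n).symm S i ≠ (cutEquiv n).symm S j then (1:ℝ) else 0)
      = (if (i ∈ S ∧ j ∉ S) ∨ (i ∉ S ∧ j ∈ S) then (1:ℝ) else 0) := by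
  simp only [cutEquiv, Equiv.coe_fn_symm_mk]
  by_cases hi : i ∈ S <;> by_cases hj : j ∈ S <;> simp [hi, hj]

lemma kdist_nonneg (n k : ℕ) (x : Fin n → ℤˣ) : 0 ≤ kSubsetCutDist n k x := by
  unfold kSubsetCutDist; positivity

lemma kdist_sum_one (n k : ℕ) (hkn : k ≤ n) : ∑ x, kSubsetCutDist n k x = 1 := by
  have hC : (n.choose k : ℝ) ≠ 0 := Nat.cast_ne_zero.mpr (Nat.choose_pos hkn).ne'
  rw [← Equiv.sum_comp (cutEquiv n).symm (fun x => kSubsetCutDist n k x)]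
  simp_rw [kdist_symm, ← Finset.sum_div, Finset.sum_boole]
  rw [show (univ.filter fun S : Finset (Fin n) => S.card = k) = Finset.powersetCard k univ by
    rw [Finset.powersetCard_eq_filter, Finset.powerset_univ]]
  rw [Finset.card_powersetCard, Finset.card_univ, Fintype.card_fin]
  exact div_self hC

lemma count_one (n k : ℕ) (hk : 1 ≤ k) (i j : Fin n) (hij : i ≠ j) :
    (univ.filter fun S : Finset (Fin n) => S.card = k ∧ i ∈ S ∧ j ∉ S).card
      = (n - 2).choose (k - 1) := by
  have hA : ((univ.erase i).erase j).card = n - 2 := by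
    rw [card_erase_of_mem (mem_erase.mpr ⟨hij.symm, mem_univ j⟩), card_erase_of_mem (mem_univ i)]
    simp; omega
  rw [← hA, ← Finset.card_powersetCard]
  refine Finset.card_bij' (fun S _ => S.erase i) (fun T _ => insert i T) ?hi ?hj ?li ?ri
  case hi =>
    intro S hS
    simp only [mem_filter, mem_univ, true_and] at hS
    obtain ⟨hc, hiS, hjS⟩ := hS
    rw [Finset.mem_powersetCard]
    constructor
    · intro a ha
      rw [mem_erase] at ha ⊢
      refine ⟨?_, mem_erase.mpr ⟨ha.1, mem_univ a⟩⟩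
      rintro rfl; exact hjS ha.2
    · rw [card_erase_of_mem hiS, hc]
  case hj =>
    intro T hT
    rw [Finset.mem_powersetCard] at hT
    obtain ⟨hsub, hc⟩ := hT
    have hiT : i ∉ T := fun h => (mem_erase.mp (mem_erase.mp (hsub h)).2).1 rfl
    have hjT : j ∉ T := fun h => (mem_erase.mp (hsub h)).1 rfl
    simp only [mem_filter, mem_univ, true_and]
    refine ⟨?_, mem_insert_self i T, ?_⟩
    · rw [card_insert_of_notMem hiT, hc]; omega
    · simp [hij.symm, hjT]
  case li =>
    intro S hS
    simp only [mem_filter, mem_univ, true_and] at hS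
    exact Finset.insert_erase hS.2.1
  case ri =>
    intro T hT
    rw [Finset.mem_powersetCard] at hT
    exact Finset.erase_insert (fun h => (mem_erase.mp (mem_erase.mp (hT.1 h)).2).1 rfl)

lemma edge_sum (n k : ℕ) (hk : 1 ≤ k) (i j : Fin n) (hij : i ≠ j) :
    (∑ x, kSubsetCutDist n k x * (if x i ≠ x j then (1:ℝ) else 0))
      = 2 * ((n-2).choose (k-1) : ℝ) / (n.choose k : ℝ) := by
  rw [← Equiv.sum_comp (cutEquiv n).symm
    (fun x => kSubsetCutDist n k x * (if x i ≠ x j then (1:ℝ) else 0))]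
  have hterm : ∀ S : Finset (Fin n),
      kSubsetCutDist n k ((cutEquiv n).symm S) *
        (if (cutEquiv n).symm S i ≠ (cutEquiv n).symm S j then (1:ℝ) else 0)
      = (if S.card = k ∧ ((i ∈ S ∧ j ∉ S) ∨ (i ∉ S ∧ j ∈ S)) then (1:ℝ) else 0)
          / (n.choose k : ℝ) := by
    intro S
    rw [kdist_symm, ind_symm]
    by_cases hc : S.card = k <;>
      by_cases hx : (i ∈ S ∧ j ∉ S) ∨ (i ∉ S ∧ j ∈ S) <;>
      simp [hc, hx]
  rw [Finset.sum_congr rfl (fun S _ => hterm S), ← Finset.sum_div,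
    Finset.sum_boole]
  congr 1
  have hsplit : (univ.filter fun S : Finset (Fin n) =>
      S.card = k ∧ ((i ∈ S ∧ j ∉ S) ∨ (i ∉ S ∧ j ∈ S)))
      = (univ.filter fun S : Finset (Fin n) => S.card = k ∧ i ∈ S ∧ j ∉ S)
        ∪ (univ.filter fun S : Finset (Fin n) => S.card = k ∧ j ∈ S ∧ i ∉ S) := by
    ext S
    simp only [mem_filter, mem_univ, true_and, mem_union]
    tauto
  have hdisj : Disjoint
      (univ.filter fun S : Finset (Fin n) => S.card = k ∧ i ∈ S ∧ j ∉ S)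
      (univ.filter fun S : Finset (Fin n) => S.card = k ∧ j ∈ S ∧ i ∉ S) := by
    rw [Finset.disjoint_filter]
    tauto
  rw [hsplit, Finset.card_union_of_disjoint hdisj, count_one n k hk i j hij,
    count_one n k hk j i hij.symm]
  push_cast
  ring

lemma choose_id (n k : ℕ) (hn : 2 ≤ n) (hk : 1 ≤ k) :
    n * ((n-1) * (n-2).choose (k-1)) = (k * (n-k)) * n.choose k := by
  obtain ⟨m, rfl⟩ : ∃ m, n = m + 2 := ⟨n - 2, by omega⟩
  obtain ⟨r, rfl⟩ : ∃ r, k = r + 1 := ⟨k - 1, by omega⟩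
  simp only [Nat.add_sub_cancel]
  calc (m+2) * ((m+1) * m.choose r)
      = (m+2) * ((m+1).choose (r+1) * (r+1)) := by
        rw [← Nat.add_one_mul_choose_eq]
    _ = ((m+2) * (m+1).choose (r+1)) * (r+1) := by ring
    _ = ((m+2).choose (r+2) * (r+2)) * (r+1) := by
        rw [← Nat.add_one_mul_choose_eq]
    _ = ((m+2).choose (r+1) * (m+2 - (r+1))) * (r+1) := by
        rw [Nat.choose_succ_right_eq]
    _ = ((r+1) * (m+2 - (r+1))) * (m+2).choose (r+1) := by ring

lemma value_eq (n k : ℕ) (hn : 2 ≤ n) (hk : 1 ≤ k) (hkn : k ≤ n)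
    (hpar : (Even n ∧ 2 * k = n) ∨ (¬ Even n ∧ (2 * k = n + 1 ∨ 2 * k = n - 1))) :
    2 * ((n-2).choose (k-1) : ℝ) / (n.choose k : ℝ)
      = (if Even n then (n : ℝ) / (2 * ((n : ℝ) - 1)) else ((n : ℝ) + 1) / (2 * (n : ℝ))) := by
  have hC : (n.choose k : ℝ) ≠ 0 := Nat.cast_ne_zero.mpr (Nat.choose_pos hkn).ne'
  have key : (n:ℝ) * (((n:ℝ)-1) * ((n-2).choose (k-1) : ℝ))
      = ((k:ℝ) * ((n:ℝ)-(k:ℝ))) * (n.choose k : ℝ) := by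
    have h := choose_id n k hn hk
    have hcast : ((n : ℝ)) * ((((n-1 : ℕ)) : ℝ) * ((n-2).choose (k-1) : ℝ))
        = ((k:ℝ) * (((n-k : ℕ)) : ℝ)) * (n.choose k : ℝ) := by exact_mod_cast h
    rw [Nat.cast_sub (by omega : 1 ≤ n), Nat.cast_sub hkn] at hcast
    push_cast at hcast ⊢
    linarith [hcast]
  have hn1 : (n:ℝ) - 1 ≠ 0 := by
    have : (2:ℝ) ≤ (n:ℝ) := by exact_mod_cast hn
    linarith
  have hn0 : (n:ℝ) ≠ 0 := by positivity
  have h2 : 2 * ((n-2).choose (k-1) : ℝ) / (n.choose k : ℝ)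
      = 2 * (k:ℝ) * ((n:ℝ)-(k:ℝ)) / ((n:ℝ) * ((n:ℝ)-1)) := by
    rw [div_eq_div_iff hC (by exact mul_ne_zero hn0 hn1)]
    linear_combination 2 * key
  rw [h2]
  rcases hpar with ⟨he, hkk⟩ | ⟨ho, hkk | hkk⟩
  · have hck : (n:ℝ) = 2 * k := by exact_mod_cast hkk.symm
    have hk1 : 2*(k:ℝ) - 1 ≠ 0 := by rw [hck] at hn1; exact hn1
    have hk0 : (k:ℝ) ≠ 0 := Nat.cast_ne_zero.mpr (by omega)
    rw [if_pos he, hck]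
    field_simp
    ring
  · have hck : (k:ℝ) = ((n:ℝ) + 1) / 2 := by
      have : (2*k : ℝ) = (n:ℝ) + 1 := by exact_mod_cast hkk
      linarith
    rw [if_neg ho, hck]
    field_simp
    ring
  · have hck : (k:ℝ) = ((n:ℝ) - 1) / 2 := by
      have : ((2*k : ℕ) : ℝ) = ((n - 1 : ℕ) : ℝ) := by exact_mod_cast hkk
      rw [Nat.cast_sub (by omega : 1 ≤ n)] at this
      push_cast at this
      linarith
    rw [if_neg ho, hck]
    field_simp
    ring

lemma cross_bound (n : ℕ) (x : Fin n → ℤˣ) :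
    (∑ i, ∑ j, (if x i ≠ x j then (1:ℝ) else 0)) ≤ (2 * (n^2/4) : ℕ) := by
  classical
  set m := (univ.filter fun a => x a = 1).card with hm
  clear_value m
  have hmc : (univ.filter fun a => ¬ x a = 1).card = n - m := by
    have := Finset.card_filter_add_card_filter_not (s := (univ : Finset (Fin n)))
      (p := fun a => x a = 1)
    simp [Finset.card_univ] at this
    omega
  have hrow : ∀ i, (∑ j, (if x i ≠ x j then (1:ℝ) else 0))
      = ((univ.filter fun j => x i ≠ x j).card : ℝ) := by
    intro i; rw [Finset.sum_boole]
  have hsum : (∑ i, ∑ j, (if x i ≠ x j then (1:ℝ) else 0))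
      = ((2 * (m * (n - m)) : ℕ) : ℝ) := by
    rw [Finset.sum_congr rfl (fun i _ => hrow i)]
    have hcase : ∀ i, ((univ.filter fun j => x i ≠ x j).card : ℝ)
        = if x i = 1 then ((n - m : ℕ) : ℝ) else ((m : ℕ) : ℝ) := by
      intro i
      by_cases hi : x i = 1
      · rw [if_pos hi]
        rw [← hmc]
        norm_cast
        refine congrArg Finset.card ?_
        apply Finset.filter_congr
        intro j _
        simp only [hi]
        constructor
        · intro h h2; exact h h2.symm
        · intro h h2; exact h h2.symm
      · rw [if_neg hi]
        have hi' : x i = -1 := (Int.units_eq_one_or (x i)).resolve_left hi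
        rw [hm]
        norm_cast
        refine congrArg Finset.card ?_
        apply Finset.filter_congr
        intro j _
        rcases Int.units_eq_one_or (x j) with hj | hj <;> simp [hi', hj]
    rw [Finset.sum_congr rfl (fun i _ => hcase i), Finset.sum_ite, Finset.sum_const,
      Finset.sum_const]
    rw [← hm, hmc]
    push_cast
    ring
  rw [hsum]
  have : 2 * (m * (n - m)) ≤ 2 * (n^2/4) := by
    have hmn : m ≤ n := by
      rw [hm]
      simpa [Finset.card_univ] using
        Finset.card_filter_le (univ : Finset (Fin n)) (fun a => x a = 1)
    have h4 : m * (n - m) * 4 ≤ n^2 := by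
      obtain ⟨d, rfl⟩ : ∃ d, n = m + d := ⟨n - m, by omega⟩
      simp only [Nat.add_sub_cancel_left]
      nlinarith [two_mul_le_add_sq m d]
    have := (Nat.le_div_iff_mul_le (by norm_num : 0 < 4)).mpr h4
    omega
  exact_mod_cast this

lemma targetV (n : ℕ) (hn : 2 ≤ n) :
    ((2 * (n^2/4) : ℕ) : ℝ) / ((n * (n-1) : ℕ) : ℝ)
      = (if Even n then (n : ℝ) / (2 * ((n : ℝ) - 1)) else ((n : ℝ) + 1) / (2 * (n : ℝ))) := by
  have hc : ((n * (n-1) : ℕ) : ℝ) = (n:ℝ) * ((n:ℝ) - 1) := by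
    push_cast [Nat.cast_sub (by omega : 1 ≤ n)]; ring
  have hn1 : (n:ℝ) - 1 ≠ 0 := by
    have : (2:ℝ) ≤ (n:ℝ) := by exact_mod_cast hn
    linarith
  have hn0 : (n:ℝ) ≠ 0 := by positivity
  rw [hc]
  rcases Nat.even_or_odd n with he | ho
  · obtain ⟨l, hl⟩ := he
    have h4 : n^2/4 = l^2 := by
      subst hl
      have : (l+l)^2 = 4*l^2 := by ring
      omega
    rw [if_pos (show Even n from ⟨l, hl⟩), h4]
    have hnl : (n:ℝ) = 2*l := by rw [hl]; push_cast; ring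
    rw [hnl] at hn1 hn0 ⊢
    have hl0 : (l:ℝ) ≠ 0 := Nat.cast_ne_zero.mpr (by omega)
    push_cast
    field_simp
  · obtain ⟨l, hl⟩ := ho
    have h4 : n^2/4 = l*(l+1) := by
      subst hl
      have : (2*l+1)^2 = 4*(l*(l+1)) + 1 := by ring
      omega
    rw [if_neg (by simp [Nat.even_iff]; omega), h4]
    have hnl : (n:ℝ) = 2*l+1 := by rw [hl]; push_cast; ring
    rw [hnl] at hn1 hn0 ⊢
    have hl0 : (l:ℝ) ≠ 0 := by
      have : 1 ≤ l := by omega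
      exact Nat.cast_ne_zero.mpr (by omega)
    push_cast
    field_simp
    ring

lemma upper_bound (n : ℕ) (hn : 2 ≤ n) {t : ℝ} {p : (Fin n → ℤˣ) → ℝ}
    (hp0 : ∀ x, 0 ≤ p x) (hp1 : ∑ x, p x = 1)
    (hpt : ∀ u v : Fin n, u ≠ v → t ≤ ∑ x, p x * (if x u ≠ x v then (1:ℝ) else 0)) :
    t ≤ ((2 * (n^2/4) : ℕ) : ℝ) / ((n * (n-1) : ℕ) : ℝ) := by
  have hE : (0:ℝ) < ((n * (n-1) : ℕ) : ℝ) := by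
    have : 0 < n * (n-1) := by
      apply Nat.mul_pos <;> omega
    exact_mod_cast this
  rw [le_div_iff₀ hE]
  calc t * ((n * (n-1) : ℕ) : ℝ)
      = ∑ i : Fin n, ∑ _j ∈ univ.erase i, t := by
        simp only [Finset.sum_const, Finset.card_erase_of_mem (mem_univ _),
          Finset.card_univ, Fintype.card_fin, nsmul_eq_mul]
        push_cast [Nat.cast_sub (by omega : 1 ≤ n)]
        ring
    _ ≤ ∑ i : Fin n, ∑ j ∈ univ.erase i, (∑ x, p x * (if x i ≠ x j then (1:ℝ) else 0)) := by
        refine Finset.sum_le_sum fun i _ => Finset.sum_le_sum fun j hj => ?_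
        exact hpt i j (Finset.mem_erase.mp hj).1.symm
    _ ≤ ∑ i : Fin n, ∑ j : Fin n, (∑ x, p x * (if x i ≠ x j then (1:ℝ) else 0)) := by
        refine Finset.sum_le_sum fun i _ => ?_
        refine Finset.sum_le_sum_of_subset_of_nonneg (Finset.subset_univ _) fun j _ _ => ?_
        refine Finset.sum_nonneg fun x _ => mul_nonneg (hp0 x) ?_
        split <;> norm_num
    _ = ∑ x, p x * (∑ i : Fin n, ∑ j : Fin n, (if x i ≠ x j then (1:ℝ) else 0)) := by
        rw [eq_comm]
        simp_rw [Finset.mul_sum]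
        rw [Finset.sum_comm]
        exact Finset.sum_congr rfl fun i _ => Finset.sum_comm
    _ ≤ ∑ x, p x * ((2 * (n^2/4) : ℕ) : ℝ) := by
        exact Finset.sum_le_sum fun x _ => mul_le_mul_of_nonneg_left (cross_bound n x) (hp0 x)
    _ = ((2 * (n^2/4) : ℕ) : ℝ) := by rw [← Finset.sum_mul, hp1, one_mul]

end Aux

/-- The Fair Cut Cover value of the complete graph `K_n` is
`n/(2(n-1))` for even `n` and `(n+1)/(2n)` for odd `n`, attained by the uniform
distribution over indicator cuts of `k`-element subsets with `k = n/2`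
(`n` even) resp. `k = (n ± 1)/2` (`n` odd): every edge of `K_n` is cut with
exactly this probability under that distribution. -/
theorem fairCutCover_complete_graph (n : ℕ) (hn : 2 ≤ n) :
    fairCutCover (⊤ : SimpleGraph (Fin n)) =
      (if Even n then (n : ℝ) / (2 * ((n : ℝ) - 1)) else ((n : ℝ) + 1) / (2 * (n : ℝ))) ∧
    ∀ k : ℕ, ((Even n ∧ 2 * k = n) ∨ (¬ Even n ∧ (2 * k = n + 1 ∨ 2 * k = n - 1))) →
      ∀ i j : Fin n, i ≠ j →
        (∑ x, kSubsetCutDist n k x * (if x i ≠ x j then (1 : ℝ) else 0)) =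
          (if Even n then (n : ℝ) / (2 * ((n : ℝ) - 1)) else ((n : ℝ) + 1) / (2 * (n : ℝ))) := by
  have part2 : ∀ k : ℕ,
      ((Even n ∧ 2 * k = n) ∨ (¬ Even n ∧ (2 * k = n + 1 ∨ 2 * k = n - 1))) →
      ∀ i j : Fin n, i ≠ j →
        (∑ x, kSubsetCutDist n k x * (if x i ≠ x j then (1 : ℝ) else 0)) =
          (if Even n then (n : ℝ) / (2 * ((n : ℝ) - 1)) else ((n : ℝ) + 1) / (2 * (n : ℝ))) := by
    intro k hk i j hij
    have hk1 : 1 ≤ k := by rcases hk with ⟨_, h⟩ | ⟨_, h | h⟩ <;> omega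
    have hkn : k ≤ n := by rcases hk with ⟨_, h⟩ | ⟨_, h | h⟩ <;> omega
    rw [edge_sum n k hk1 i j hij, value_eq n k hn hk1 hkn hk]
  refine ⟨?_, part2⟩
  set T := (if Even n then (n : ℝ) / (2 * ((n : ℝ) - 1)) else ((n : ℝ) + 1) / (2 * (n : ℝ)))
    with hT
  have hpark : (Even n ∧ 2 * ((n+1)/2) = n) ∨
      (¬ Even n ∧ (2 * ((n+1)/2) = n + 1 ∨ 2 * ((n+1)/2) = n - 1)) := by
    rcases Nat.even_or_odd n with he | ho
    · exact Or.inl ⟨he, by obtain ⟨l, rfl⟩ := he; omega⟩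
    · refine Or.inr ⟨?_, Or.inl (by obtain ⟨l, rfl⟩ := ho; omega)⟩
      rw [Nat.even_iff]
      rw [Nat.odd_iff] at ho
      omega
  have hmem : T ∈ {t : ℝ | ∃ p : (Fin n → ℤˣ) → ℝ, (∀ x, 0 ≤ p x) ∧ (∑ x, p x = 1) ∧
      ∀ u v, (⊤ : SimpleGraph (Fin n)).Adj u v →
        t ≤ ∑ x, p x * (if x u ≠ x v then (1 : ℝ) else 0)} := by
    refine ⟨kSubsetCutDist n ((n+1)/2), kdist_nonneg n _, kdist_sum_one n _ (by omega), ?_⟩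
    intro u v huv
    exact le_of_eq (part2 ((n+1)/2) hpark u v huv.ne).symm
  have hub : ∀ t ∈ {t : ℝ | ∃ p : (Fin n → ℤˣ) → ℝ, (∀ x, 0 ≤ p x) ∧ (∑ x, p x = 1) ∧
      ∀ u v, (⊤ : SimpleGraph (Fin n)).Adj u v →
        t ≤ ∑ x, p x * (if x u ≠ x v then (1 : ℝ) else 0)}, t ≤ T := by
    rintro t ⟨p, hp0, hp1, hpt⟩
    have h := upper_bound n hn hp0 hp1
      (fun u v huv => hpt u v ((SimpleGraph.top_adj u v).mpr huv))
    rwa [targetV n hn] at h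
  rw [fairCutCover]
  exact le_antisymm (csSup_le ⟨T, hmem⟩ hub) (le_csSup ⟨T, hub⟩ hmem)
end

section
/- For every integer n ≥ 4 there exist real numbers γ and β such that (1 - F_n(γ, β))/2 > (1/π)·arccos(-1/(n-1)), where F_n(γ, β) = -sin(4β)·sin(γ)·cos(γ)^(n-2) + (1/2)·sin(2β)²·(1 - cos(2γ)^(n-2)). Consequently, the depth-1 standard QAOA Fair Cut Cover value of the complete graph K_n strictly exceeds the value (1/π)·arccos(1/(1-n)) achieved by SDP with hyperplane rounding. -/
set_option maxHeartbeats 2000000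

open Real

lemma arcsin_le_cube (y : ℝ) (hy0 : 0 < y) (hy3 : y ≤ 1/3) :
    arcsin y ≤ y + y ^ 3 / 4 := by
  have hy2 : y ^ 2 ≤ 1/9 := by nlinarith
  have hyq : y + y ^ 3 / 4 ≤ 37/36 * y := by nlinarith
  have hq0 : 0 < y + y ^ 3 / 4 := by positivity
  have hq1 : y + y ^ 3 / 4 ≤ 1 := by nlinarith
  have hpi : (1 : ℝ) ≤ π / 2 := by nlinarith [pi_gt_three]
  rw [arcsin_le_iff_le_sin ⟨by linarith, by linarith⟩ ⟨by linarith, by linarith⟩]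
  have hb := Real.sin_bound (x := y + y ^ 3 / 4) (by rw [abs_of_nonneg hq0.le]; exact hq1)
  have hb' : (y + y ^ 3 / 4) - (y + y ^ 3 / 4) ^ 3 / 6
      - (y + y ^ 3 / 4) ^ 4 * (5/96) ≤ sin (y + y ^ 3 / 4) := by
    have h1 := (abs_le.1 hb).1
    rw [abs_of_nonneg hq0.le] at h1
    nlinarith [mul_le_mul_of_nonneg_left hq1 (pow_nonneg hq0.le 4)]
  have h3 : (y + y ^ 3 / 4) ^ 3 ≤ (37/36 * y) ^ 3 := pow_le_pow_left₀ hq0.le hyq 3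
  have h4 : (y + y ^ 3 / 4) ^ 4 ≤ (37/36 * y) ^ 4 := pow_le_pow_left₀ hq0.le hyq 4
  have hy30 : 0 < y ^ 3 := by positivity
  have h4' : y ^ 4 ≤ y ^ 3 / 3 := by nlinarith
  nlinarith

/-- Rational lower bound for the negated QAOA expectation at `β = arcsin x / 2`. -/
lemma negF_lower (m : ℕ) (x r γ : ℝ) (hx0 : 0 ≤ x) (hx1 : x ≤ 1) (hr0 : 0 ≤ r)
    (hr : r ^ 2 ≤ 1 - x ^ 2) (hγ0 : 0 < γ) (hγ1 : γ ≤ 1) (hγ2 : 2 * γ ^ 2 ≤ 1) :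
    2 * x * r * (γ - γ ^ 3 / 6 - 5 / 96 * γ ^ 4) * (1 - γ ^ 2 / 2) ^ m
      - x ^ 2 / 2 * (1 - (1 - 2 * γ ^ 2) ^ m)
    ≤ sin (4 * (arcsin x / 2)) * sin γ * cos γ ^ m
      - 1 / 2 * sin (2 * (arcsin x / 2)) ^ 2 * (1 - cos (2 * γ) ^ m) := by
  have h2 : 2 * (arcsin x / 2) = arcsin x := by ring
  have h4 : 4 * (arcsin x / 2) = 2 * arcsin x := by ring
  rw [h2, h4, sin_two_mul, sin_arcsin (by linarith) hx1, cos_arcsin]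
  -- √(1-x²) ≥ r
  have hsq : r ≤ Real.sqrt (1 - x ^ 2) := by
    rw [show r = Real.sqrt (r ^ 2) from (Real.sqrt_sq hr0).symm]
    exact Real.sqrt_le_sqrt hr
  have hsq0 : (0:ℝ) ≤ Real.sqrt (1 - x ^ 2) := Real.sqrt_nonneg _
  -- sin γ lower bound
  have hsb := Real.sin_bound (x := γ) (by rw [abs_of_nonneg hγ0.le]; exact hγ1)
  have hsin : γ - γ ^ 3 / 6 - 5 / 96 * γ ^ 4 ≤ sin γ := by
    have h1 := (abs_le.1 hsb).1
    rw [abs_of_nonneg hγ0.le] at h1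
    nlinarith [mul_le_mul_of_nonneg_left hγ1 (pow_nonneg hγ0.le 4)]
  have hsin0 : 0 ≤ sin γ := sin_nonneg_of_nonneg_of_le_pi hγ0.le
    (by nlinarith [pi_gt_three])
  have hg3 : γ ^ 3 ≤ γ := by nlinarith
  have hg4 : γ ^ 4 ≤ γ := by nlinarith
  have hS0 : 0 ≤ γ - γ ^ 3 / 6 - 5 / 96 * γ ^ 4 := by linarith
  -- cos power bounds
  have hC0 : (0:ℝ) ≤ 1 - γ ^ 2 / 2 := by nlinarith
  have hcpow : (1 - γ ^ 2 / 2) ^ m ≤ cos γ ^ m :=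
    pow_le_pow_left₀ hC0 one_sub_sq_div_two_le_cos m
  have hD0 : (0:ℝ) ≤ 1 - 2 * γ ^ 2 := by linarith
  have hcos2 : 1 - 2 * γ ^ 2 ≤ cos (2 * γ) := by
    have h := one_sub_sq_div_two_le_cos (x := 2 * γ)
    nlinarith [h]
  have hdpow : (1 - 2 * γ ^ 2) ^ m ≤ cos (2 * γ) ^ m :=
    pow_le_pow_left₀ hD0 hcos2 m
  -- term 1
  have hA : 2 * x * r ≤ 2 * (x * Real.sqrt (1 - x ^ 2)) := by nlinarith
  have hB : (γ - γ ^ 3 / 6 - 5 / 96 * γ ^ 4) * (1 - γ ^ 2 / 2) ^ m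
      ≤ sin γ * cos γ ^ m :=
    mul_le_mul hsin hcpow (pow_nonneg hC0 m) hsin0
  have hB0 : 0 ≤ (γ - γ ^ 3 / 6 - 5 / 96 * γ ^ 4) * (1 - γ ^ 2 / 2) ^ m :=
    mul_nonneg hS0 (pow_nonneg hC0 m)
  have hA'0 : 0 ≤ 2 * (x * Real.sqrt (1 - x ^ 2)) := by positivity
  have ht1 : 2 * x * r * ((γ - γ ^ 3 / 6 - 5 / 96 * γ ^ 4) * (1 - γ ^ 2 / 2) ^ m)
      ≤ 2 * (x * Real.sqrt (1 - x ^ 2)) * (sin γ * cos γ ^ m) :=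
    mul_le_mul hA hB hB0 hA'0
  -- term 2
  have ht2 : x ^ 2 / 2 * (1 - cos (2 * γ) ^ m) ≤ x ^ 2 / 2 * (1 - (1 - 2 * γ ^ 2) ^ m) :=
    mul_le_mul_of_nonneg_left (by linarith) (by positivity)
  ring_nf at ht1 ht2 ⊢
  linarith [ht1, ht2]

/-- Reduce a concrete case to a rational inequality. -/
lemma witness (m : ℕ) (x r γ : ℝ) (hx0 : 0 ≤ x) (hx1 : x ≤ 1) (hr0 : 0 ≤ r)
    (hr : r ^ 2 ≤ 1 - x ^ 2) (hγ0 : 0 < γ) (hγ1 : γ ≤ 1) (hγ2 : 2 * γ ^ 2 ≤ 1)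
    (hnum : 2 * (1 / ((m : ℝ) + 1) + (1 / ((m : ℝ) + 1)) ^ 3 / 4) <
      3.141592 * (2 * x * r * (γ - γ ^ 3 / 6 - 5 / 96 * γ ^ 4) * (1 - γ ^ 2 / 2) ^ m
        - x ^ 2 / 2 * (1 - (1 - 2 * γ ^ 2) ^ m)))
    (hLB : 0 ≤ 2 * x * r * (γ - γ ^ 3 / 6 - 5 / 96 * γ ^ 4) * (1 - γ ^ 2 / 2) ^ m
        - x ^ 2 / 2 * (1 - (1 - 2 * γ ^ 2) ^ m)) :
    ∃ γ' β : ℝ, 2 * (1 / ((m : ℝ) + 1) + (1 / ((m : ℝ) + 1)) ^ 3 / 4) <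
      π * (sin (4 * β) * sin γ' * cos γ' ^ m
        - 1 / 2 * sin (2 * β) ^ 2 * (1 - cos (2 * γ') ^ m)) := by
  refine ⟨γ, arcsin x / 2, hnum.trans_le ?_⟩
  calc 3.141592 * (2 * x * r * (γ - γ ^ 3 / 6 - 5 / 96 * γ ^ 4) * (1 - γ ^ 2 / 2) ^ m
        - x ^ 2 / 2 * (1 - (1 - 2 * γ ^ 2) ^ m))
      ≤ π * (2 * x * r * (γ - γ ^ 3 / 6 - 5 / 96 * γ ^ 4) * (1 - γ ^ 2 / 2) ^ m
        - x ^ 2 / 2 * (1 - (1 - 2 * γ ^ 2) ^ m)) :=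
        mul_le_mul_of_nonneg_right pi_gt_d6.le hLB
    _ ≤ _ := mul_le_mul_of_nonneg_left
        (negF_lower m x r γ hx0 hx1 hr0 hr hγ0 hγ1 hγ2) pi_pos.le

lemma key (m : ℕ) (hm : 2 ≤ m) :
    ∃ γ β : ℝ, 2 * (1 / ((m : ℝ) + 1) + (1 / ((m : ℝ) + 1)) ^ 3 / 4) <
      π * (sin (4 * β) * sin γ * cos γ ^ m
        - 1 / 2 * sin (2 * β) ^ 2 * (1 - cos (2 * γ) ^ m)) := by
  rcases lt_or_ge m 20 with h20 | h20
  · interval_cases m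
    · exact witness 2 (279/521) (440/521) (23/50) (by norm_num) (by norm_num) (by norm_num)
        (by norm_num) (by norm_num) (by norm_num) (by norm_num) (by norm_num) (by norm_num)
    · exact witness 3 (33/65) (56/65) (39/100) (by norm_num) (by norm_num) (by norm_num)
        (by norm_num) (by norm_num) (by norm_num) (by norm_num) (by norm_num) (by norm_num)
    · exact witness 4 (780/1621) (1421/1621) (7/20) (by norm_num) (by norm_num) (by norm_num)
        (by norm_num) (by norm_num) (by norm_num) (by norm_num) (by norm_num) (by norm_num)
    · exact witness 5 (8/17) (15/17) (31/100) (by norm_num) (by norm_num) (by norm_num)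
        (by norm_num) (by norm_num) (by norm_num) (by norm_num) (by norm_num) (by norm_num)
    · exact witness 6 (136/305) (273/305) (29/100) (by norm_num) (by norm_num) (by norm_num)
        (by norm_num) (by norm_num) (by norm_num) (by norm_num) (by norm_num) (by norm_num)
    · exact witness 7 (560/1289) (1161/1289) (13/50) (by norm_num) (by norm_num) (by norm_num)
        (by norm_num) (by norm_num) (by norm_num) (by norm_num) (by norm_num) (by norm_num)
    · exact witness 8 (448/1073) (975/1073) (1/4) (by norm_num) (by norm_num) (by norm_num)
        (by norm_num) (by norm_num) (by norm_num) (by norm_num) (by norm_num) (by norm_num)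
    · exact witness 9 (84/205) (187/205) (23/100) (by norm_num) (by norm_num) (by norm_num)
        (by norm_num) (by norm_num) (by norm_num) (by norm_num) (by norm_num) (by norm_num)
    · exact witness 10 (348/877) (805/877) (11/50) (by norm_num) (by norm_num) (by norm_num)
        (by norm_num) (by norm_num) (by norm_num) (by norm_num) (by norm_num) (by norm_num)
    · exact witness 11 (5/13) (12/13) (21/100) (by norm_num) (by norm_num) (by norm_num)
        (by norm_num) (by norm_num) (by norm_num) (by norm_num) (by norm_num) (by norm_num)
    · exact witness 12 (504/1345) (1247/1345) (1/5) (by norm_num) (by norm_num) (by norm_num)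
        (by norm_num) (by norm_num) (by norm_num) (by norm_num) (by norm_num) (by norm_num)
    · exact witness 13 (372/997) (925/997) (19/100) (by norm_num) (by norm_num) (by norm_num)
        (by norm_num) (by norm_num) (by norm_num) (by norm_num) (by norm_num) (by norm_num)
    · exact witness 14 (168/457) (425/457) (9/50) (by norm_num) (by norm_num) (by norm_num)
        (by norm_num) (by norm_num) (by norm_num) (by norm_num) (by norm_num) (by norm_num)
    · exact witness 15 (96/265) (247/265) (17/100) (by norm_num) (by norm_num) (by norm_num)
        (by norm_num) (by norm_num) (by norm_num) (by norm_num) (by norm_num) (by norm_num)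
    · exact witness 16 (44/125) (117/125) (17/100) (by norm_num) (by norm_num) (by norm_num)
        (by norm_num) (by norm_num) (by norm_num) (by norm_num) (by norm_num) (by norm_num)
    · exact witness 17 (273/785) (736/785) (4/25) (by norm_num) (by norm_num) (by norm_num)
        (by norm_num) (by norm_num) (by norm_num) (by norm_num) (by norm_num) (by norm_num)
    · exact witness 18 (184/545) (513/545) (4/25) (by norm_num) (by norm_num) (by norm_num)
        (by norm_num) (by norm_num) (by norm_num) (by norm_num) (by norm_num) (by norm_num)
    · exact witness 19 (184/545) (513/545) (3/20) (by norm_num) (by norm_num) (by norm_num)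
        (by norm_num) (by norm_num) (by norm_num) (by norm_num) (by norm_num) (by norm_num)
  · have hm0 : (0:ℝ) < m := by
      have : (20:ℝ) ≤ m := by exact_mod_cast h20
      linarith
    set t : ℝ := Real.sqrt (1 / m) with htdef
    have ht2 : t ^ 2 = 1 / (m:ℝ) := Real.sq_sqrt (by positivity)
    have ht0 : 0 < t := Real.sqrt_pos.2 (by positivity)
    have hm20 : (20:ℝ) ≤ m := by exact_mod_cast h20
    have htb : t ^ 2 ≤ 1 / 20 := by
      rw [ht2]; rw [div_le_div_iff₀ hm0 (by norm_num)]; linarith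
    have hmt : (m:ℝ) * t ^ 2 = 1 := by rw [ht2]; field_simp
    -- the witness values
    set x : ℝ := 83/50 * t with hxdef
    set γ : ℝ := 41/100 * t with hγdef
    have hx2 : x ^ 2 ≤ 1378/10000 := by rw [hxdef]; nlinarith [htb]
    have hx0 : 0 ≤ x := by positivity
    have hx1 : x ≤ 1 := by nlinarith [hx2, sq_nonneg (x - 1)]
    have hx4 : x ^ 4 ≤ 19/1000 := by nlinarith [hx2, sq_nonneg x]
    have hr0 : 0 ≤ 1 - x ^ 2 / 2 - x ^ 4 / 2 := by nlinarith
    have hr : (1 - x ^ 2 / 2 - x ^ 4 / 2) ^ 2 ≤ 1 - x ^ 2 := by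
      nlinarith [sq_nonneg x, hx2, sq_nonneg (x^2), hx4]
    have hγ0 : 0 < γ := by rw [hγdef]; positivity
    have hγ2s : γ ^ 2 ≤ 1/100 := by rw [hγdef]; nlinarith [htb]
    have hγ1 : γ ≤ 1 := by nlinarith [hγ2s, sq_nonneg (γ - 1)]
    have hγ2 : 2 * γ ^ 2 ≤ 1 := by linarith
    have h := negF_lower m x (1 - x ^ 2 / 2 - x ^ 4 / 2) γ hx0 hx1 hr0 hr hγ0 hγ1 hγ2
    -- Bernoulli bounds
    have hmg : (m:ℝ) * γ ^ 2 = 1681/10000 := by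
      rw [hγdef]; rw [mul_pow]; rw [show ((41:ℝ)/100)^2 = 1681/10000 by norm_num]
      rw [show (m:ℝ) * (1681/10000 * t^2) = 1681/10000 * ((m:ℝ) * t^2) by ring, hmt]; ring
    have hC : (1:ℝ) - 1681/20000 ≤ (1 - γ ^ 2 / 2) ^ m := by
      have hb := one_add_mul_le_pow (a := -(γ ^ 2 / 2)) (by nlinarith) m
      have e1 : (1 + -(γ ^ 2 / 2)) = 1 - γ ^ 2 / 2 := by ring
      have e2 : (1:ℝ) + (m:ℝ) * -(γ ^ 2 / 2) = 1 - 1681/20000 := by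
        have : (m:ℝ) * -(γ ^ 2 / 2) = -(((m:ℝ) * γ ^ 2) / 2) := by ring
        rw [this, hmg]; norm_num
      rw [e1, e2] at hb; exact hb
    have hD : (1:ℝ) - 1681/5000 ≤ (1 - 2 * γ ^ 2) ^ m := by
      have hb := one_add_mul_le_pow (a := -(2 * γ ^ 2)) (by nlinarith) m
      have e1 : (1 + -(2 * γ ^ 2)) = 1 - 2 * γ ^ 2 := by ring
      have e2 : (1:ℝ) + (m:ℝ) * -(2 * γ ^ 2) = 1 - 1681/5000 := by
        have : (m:ℝ) * -(2 * γ ^ 2) = -(2 * ((m:ℝ) * γ ^ 2)) := by ring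
        rw [this, hmg]; norm_num
      rw [e1, e2] at hb; exact hb
    -- prefactor nonneg
    have hγ3 : γ ^ 3 ≤ γ := by nlinarith [hγ2s, hγ0]
    have hγ4 : γ ^ 4 ≤ γ := by nlinarith [hγ2s, hγ0, hγ3]
    have hS0 : 0 ≤ γ - γ ^ 3 / 6 - 5 / 96 * γ ^ 4 := by linarith
    have hpre0 : 0 ≤ 2 * x * (1 - x ^ 2 / 2 - x ^ 4 / 2) * (γ - γ ^ 3 / 6 - 5 / 96 * γ ^ 4) := by
      have := mul_nonneg (mul_nonneg (by linarith [hx0] : (0:ℝ) ≤ 2 * x) hr0) hS0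
      linarith [this]
    have hE1 : 2 * x * (1 - x ^ 2 / 2 - x ^ 4 / 2) * (γ - γ ^ 3 / 6 - 5 / 96 * γ ^ 4)
        * (1 - 1681/20000)
        ≤ 2 * x * (1 - x ^ 2 / 2 - x ^ 4 / 2) * (γ - γ ^ 3 / 6 - 5 / 96 * γ ^ 4)
        * (1 - γ ^ 2 / 2) ^ m :=
      mul_le_mul_of_nonneg_left hC hpre0
    have hE2 : x ^ 2 / 2 * (1 - (1 - 2 * γ ^ 2) ^ m) ≤ x ^ 2 / 2 * (1681/5000) :=
      mul_le_mul_of_nonneg_left (by linarith) (by positivity)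
    -- numeric bound: E ≥ (17/25) * t^2
    have hE : 17/25 * t ^ 2
        ≤ 2 * x * (1 - x ^ 2 / 2 - x ^ 4 / 2) * (γ - γ ^ 3 / 6 - 5 / 96 * γ ^ 4)
          * (1 - 1681/20000) - x ^ 2 / 2 * (1681/5000) := by
      rw [hxdef, hγdef]
      nlinarith [htb, ht0, sq_nonneg t, mul_pos ht0 ht0,
        mul_le_mul_of_nonneg_left htb (sq_nonneg t),
        mul_le_mul_of_nonneg_left htb (mul_nonneg (mul_nonneg ht0.le ht0.le) ht0.le),
        mul_le_mul_of_nonneg_left htb (mul_nonneg (sq_nonneg t) (sq_nonneg t)),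
        mul_le_mul_of_nonneg_left htb (mul_nonneg (mul_nonneg (sq_nonneg t) (sq_nonneg t)) ht0.le),
        mul_le_mul_of_nonneg_left htb ht0.le]
    have hnegF : 17/25 * t ^ 2 ≤ sin (4 * (arcsin x / 2)) * sin γ * cos γ ^ m
        - 1 / 2 * sin (2 * (arcsin x / 2)) ^ 2 * (1 - cos (2 * γ) ^ m) := by
      linarith [hE1, hE2, hE, h]
    -- target bound
    have hy0 : (0:ℝ) < 1 / ((m:ℝ) + 1) := by positivity
    have hy21 : 1 / ((m:ℝ) + 1) ≤ 1/21 := by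
      rw [div_le_div_iff₀ (by linarith) (by norm_num)]; linarith
    have hyt : 1 / ((m:ℝ) + 1) < t ^ 2 := by
      rw [ht2]; exact one_div_lt_one_div_of_lt hm0 (by linarith)
    refine ⟨γ, arcsin x / 2, ?_⟩
    have hpi : (3.141592 : ℝ) < π := pi_gt_d6
    have hstep : 2 * (1 / ((m:ℝ) + 1) + (1 / ((m:ℝ) + 1)) ^ 3 / 4) < 3.141592 * (17/25 * t ^ 2) := by
      nlinarith [hy0, hy21, hyt, mul_pos hy0 hy0]
    calc 2 * (1 / ((m:ℝ) + 1) + (1 / ((m:ℝ) + 1)) ^ 3 / 4)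
        < 3.141592 * (17/25 * t ^ 2) := hstep
      _ ≤ π * (17/25 * t ^ 2) := by nlinarith [ht0, sq_nonneg t, hpi, mul_pos ht0 ht0]
      _ ≤ π * (sin (4 * (arcsin x / 2)) * sin γ * cos γ ^ m
          - 1 / 2 * sin (2 * (arcsin x / 2)) ^ 2 * (1 - cos (2 * γ) ^ m)) :=
        mul_le_mul_of_nonneg_left hnegF pi_pos.le

/-- For every `n ≥ 4` there are angles `γ, β` such that the
depth-1 standard QAOA edge cut probability `(1 - F_n(γ,β))/2` on the complete
graph `K_n` strictly exceeds `arccos(-1/(n-1))/π`; consequently the depth-1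
QAOA Fair Cut Cover value of `K_n` strictly exceeds the SDP-with-hyperplane-
rounding value `arccos(1/(1-n))/π`. -/
theorem qaoa_beats_sdp_hr_complete_graph (n : ℕ) (hn : 4 ≤ n) :
    (∃ γ β : ℝ,
      (1 - (-(Real.sin (4 * β) * Real.sin γ * Real.cos γ ^ (n - 2)) +
          (1 / 2) * Real.sin (2 * β) ^ 2 * (1 - Real.cos (2 * γ) ^ (n - 2)))) / 2 >
        (1 / Real.pi) * Real.arccos (-1 / ((n : ℝ) - 1))) ∧
    (1 / Real.pi) * Real.arccos (1 / (1 - (n : ℝ))) <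
      sSup {r : ℝ | ∃ γ β : ℝ, r =
        (1 - (-(Real.sin (4 * β) * Real.sin γ * Real.cos γ ^ (n - 2)) +
          (1 / 2) * Real.sin (2 * β) ^ 2 * (1 - Real.cos (2 * γ) ^ (n - 2)))) / 2} := by
  have hn4 : (4:ℝ) ≤ (n:ℝ) := by exact_mod_cast hn
  obtain ⟨γ, β, hkey⟩ := key (n - 2) (by omega)
  have hcast : ((n - 2 : ℕ) : ℝ) + 1 = (n:ℝ) - 1 := by
    rw [Nat.cast_sub (by omega : 2 ≤ n)]; push_cast; ring
  rw [hcast] at hkey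
  set y : ℝ := 1 / ((n:ℝ) - 1) with hydef
  have hy0 : 0 < y := by
    rw [hydef]
    have h1 : (0:ℝ) < (n:ℝ) - 1 := by linarith
    positivity
  have hy3 : y ≤ 1/3 := by
    rw [hydef, div_le_div_iff₀ (by linarith) (by norm_num)]; linarith
  have harc : arcsin y ≤ y + y ^ 3 / 4 := arcsin_le_cube y hy0 hy3
  have hlt : 2 * arcsin y < π * (sin (4 * β) * sin γ * cos γ ^ (n - 2)
      - 1 / 2 * sin (2 * β) ^ 2 * (1 - cos (2 * γ) ^ (n - 2))) := by
    calc 2 * arcsin y ≤ 2 * (y + y ^ 3 / 4) := by linarith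
      _ < _ := hkey
  have e1 : arccos (-1 / ((n:ℝ) - 1)) = π / 2 + arcsin y := by
    rw [show (-1 : ℝ) / ((n:ℝ) - 1) = -(1 / ((n:ℝ) - 1)) by ring,
      arccos_eq_pi_div_two_sub_arcsin, arcsin_neg]
    rw [← hydef]; ring
  have hπ0 : (π:ℝ) ≠ 0 := pi_ne_zero
  have e2 : 1 / π * (π / 2 + arcsin y) = 1 / 2 + arcsin y / π := by
    rw [mul_add]
    congr 1
    · field_simp
    · rw [one_div, inv_mul_eq_div]
  have hfrac : 1 / π * arccos (-1 / ((n:ℝ) - 1)) <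
      (1 - (-(Real.sin (4 * β) * Real.sin γ * Real.cos γ ^ (n - 2)) +
          (1 / 2) * Real.sin (2 * β) ^ 2 * (1 - Real.cos (2 * γ) ^ (n - 2)))) / 2 := by
    rw [e1, e2]
    have h2 : arcsin y / π < (sin (4 * β) * sin γ * cos γ ^ (n - 2)
        - 1 / 2 * sin (2 * β) ^ 2 * (1 - cos (2 * γ) ^ (n - 2))) / 2 := by
      rw [div_lt_div_iff₀ pi_pos two_pos]; linarith
    have e3 : (1 - (-(Real.sin (4 * β) * Real.sin γ * Real.cos γ ^ (n - 2)) +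
          (1 / 2) * Real.sin (2 * β) ^ 2 * (1 - Real.cos (2 * γ) ^ (n - 2)))) / 2
        = 1 / 2 + (sin (4 * β) * sin γ * cos γ ^ (n - 2)
        - 1 / 2 * sin (2 * β) ^ 2 * (1 - cos (2 * γ) ^ (n - 2))) / 2 := by ring
    rw [e3]; linarith
  constructor
  · exact ⟨γ, β, hfrac⟩
  · have hbdd : BddAbove {r : ℝ | ∃ γ β : ℝ, r =
        (1 - (-(Real.sin (4 * β) * Real.sin γ * Real.cos γ ^ (n - 2)) +
          (1 / 2) * Real.sin (2 * β) ^ 2 * (1 - Real.cos (2 * γ) ^ (n - 2)))) / 2} := by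
      refine ⟨1, ?_⟩
      rintro r ⟨g, b, rfl⟩
      have habs : |sin (4 * b) * sin g * cos g ^ (n - 2)| ≤ 1 := by
        rw [abs_mul, abs_mul, abs_pow]
        have h1 := abs_sin_le_one (4 * b)
        have h2 := abs_sin_le_one g
        have h3 : |cos g| ^ (n - 2) ≤ 1 := pow_le_one₀ (abs_nonneg _) (abs_cos_le_one g)
        have h4 := abs_nonneg (sin (4 * b))
        have h5 := abs_nonneg (sin g)
        have h6 := pow_nonneg (abs_nonneg (cos g)) (n - 2)
        have h12 : |sin (4 * b)| * |sin g| ≤ 1 := by nlinarith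
        have := mul_le_mul h12 h3 h6 zero_le_one
        linarith
      have hA : sin (4 * b) * sin g * cos g ^ (n - 2) ≤ 1 := (abs_le.1 habs).2
      have hc : cos (2 * g) ^ (n - 2) ≤ 1 := by
        calc cos (2 * g) ^ (n - 2) ≤ |cos (2 * g) ^ (n - 2)| := le_abs_self _
          _ = |cos (2 * g)| ^ (n - 2) := abs_pow _ _
          _ ≤ 1 := pow_le_one₀ (abs_nonneg _) (abs_cos_le_one _)
      have hB : 0 ≤ (1 / 2) * Real.sin (2 * b) ^ 2 * (1 - Real.cos (2 * g) ^ (n - 2)) :=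
        mul_nonneg (by positivity) (by linarith)
      linarith
    have hmem : (1 - (-(Real.sin (4 * β) * Real.sin γ * Real.cos γ ^ (n - 2)) +
          (1 / 2) * Real.sin (2 * β) ^ 2 * (1 - Real.cos (2 * γ) ^ (n - 2)))) / 2
        ∈ {r : ℝ | ∃ γ β : ℝ, r =
        (1 - (-(Real.sin (4 * β) * Real.sin γ * Real.cos γ ^ (n - 2)) +
          (1 / 2) * Real.sin (2 * β) ^ 2 * (1 - Real.cos (2 * γ) ^ (n - 2)))) / 2} :=
      ⟨γ, β, rfl⟩
    have hle := le_csSup hbdd hmem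
    have e4 : (1:ℝ) / (1 - (n:ℝ)) = -1 / ((n:ℝ) - 1) := by
      rw [show (1:ℝ) - (n:ℝ) = -((n:ℝ) - 1) by ring, div_neg, neg_div]
    rw [e4]
    exact lt_of_lt_of_le hfrac hle
end

section
/- For every integer d ≥ 2, setting x = 1/(d+1), the strict inequality x·(1-x)^d > (4/π²)·(arcsin x)² + (1/π)·(arcsin x)·(1 - (1-2x)^d) holds. -/
open Real

lemma arcsin_lt_aux {x : ℝ} (h0 : 0 < x) (h3 : x ≤ 1/3) :
    Real.arcsin x < x + x^3/3 := by
  have hx2 : x^2 ≤ 1/9 := by nlinarith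
  have hx3 : x^3 ≤ 1/27 := by nlinarith
  have hc0 : 0 < x + x^3/3 := by positivity
  have hc1 : x + x^3/3 ≤ 1 := by linarith
  have hsin : (x + x^3/3) - (x + x^3/3)^3/4 < Real.sin (x + x^3/3) :=
    by have := Real.sin_gt_sub_cube hc0; linarith [pow_pos hc0 3]
  have h5 : x^5 ≤ x^3/9 := by
    nlinarith [mul_nonneg (pow_pos h0 3).le (by linarith : (0:ℝ) ≤ 1/9 - x^2)]
  have h7 : x^7 ≤ x^3/81 := by
    nlinarith [mul_nonneg (pow_pos h0 5).le (by linarith : (0:ℝ) ≤ 1/9 - x^2)]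
  have h9 : x^9 ≤ x^3/729 := by
    nlinarith [mul_nonneg (pow_pos h0 7).le (by linarith : (0:ℝ) ≤ 1/9 - x^2)]
  have hxc : x < Real.sin (x + x^3/3) := by
    have hkey : (x + x^3/3)^3 ≤ (4/3)*x^3 := by nlinarith [pow_pos h0 3]
    linarith [pow_pos h0 3]
  have hπ3 := Real.pi_gt_three
  have hπ0 := Real.pi_pos
  rw [Real.arcsin_lt_iff_lt_sin ⟨by linarith, by linarith⟩
    ⟨by linarith, by linarith⟩]
  exact hxc

lemma bridge_aux {a m L : ℝ} (h : 4*a^2 + Real.pi*a*m < L*Real.pi^2) :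
    (4/Real.pi^2)*a^2 + (1/Real.pi)*a*m < L := by
  have hπ := Real.pi_pos
  have heq : (4/Real.pi^2)*a^2 + (1/Real.pi)*a*m = (4*a^2 + Real.pi*a*m)/Real.pi^2 := by
    field_simp
  rw [heq, div_lt_iff₀ (by positivity)]
  exact h

set_option maxHeartbeats 1600000 in
/-- For every integer `d ≥ 2`, with `x = 1/(d+1)`,
`x(1-x)^d > (4/π²)(arcsin x)² + (1/π)(arcsin x)(1 - (1-2x)^d)`. -/
theorem qaoa_sdp_core_inequality (d : ℕ) (hd : 2 ≤ d) (x : ℝ)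
    (hx : x = 1 / ((d : ℝ) + 1)) :
    x * (1 - x) ^ d >
      (4 / Real.pi ^ 2) * Real.arcsin x ^ 2 +
        (1 / Real.pi) * Real.arcsin x * (1 - (1 - 2 * x) ^ d) := by
  have hπ0 := Real.pi_pos
  have hπl : (3.141592:ℝ) < π := Real.pi_gt_d6
  have hπu : π < 3.141593 := Real.pi_lt_d6
  have hππ : (3.141592:ℝ)*π < π^2 := by nlinarith
  have hd3 : (3:ℝ) ≤ (d:ℝ) + 1 := by
    have : (2:ℝ) ≤ (d:ℝ) := by exact_mod_cast hd
    linarith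
  have hx0 : 0 < x := by rw [hx]; positivity
  have hx3 : x ≤ 1/3 := by
    rw [hx, div_le_div_iff₀ (by linarith) (by norm_num)]
    linarith
  have ha0 : 0 < Real.arcsin x := Real.arcsin_pos.mpr hx0
  have hac : Real.arcsin x < x + x^3/3 := arcsin_lt_aux hx0 hx3
  have hm0 : 0 ≤ 1 - (1 - 2*x)^d := by
    have h1 : (1 - 2*x)^d ≤ 1 := pow_le_one₀ (by linarith) (by linarith)
    linarith
  have hred : (4/π^2) * Real.arcsin x ^ 2 + (1/π) * Real.arcsin x * (1-(1-2*x)^d)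
      < (4/π^2)*(x+x^3/3)^2 + (1/π)*(x+x^3/3)*(1-(1-2*x)^d) := by
    have t1 : (4/π^2) * Real.arcsin x ^ 2 < (4/π^2)*(x+x^3/3)^2 := by
      have h4 : (0:ℝ) < 4/π^2 := by positivity
      have hsq : Real.arcsin x ^ 2 < (x+x^3/3)^2 := by nlinarith
      exact mul_lt_mul_of_pos_left hsq h4
    have t2 : (1/π) * Real.arcsin x * (1-(1-2*x)^d) ≤ (1/π)*(x+x^3/3)*(1-(1-2*x)^d) :=
      mul_le_mul_of_nonneg_right
        (mul_le_mul_of_nonneg_left hac.le (by positivity)) hm0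
    linarith
  suffices hS : 4*(x+x^3/3)^2 + π*(x+x^3/3)*(1-(1-2*x)^d) < (x*(1-x)^d)*π^2 by
    have := bridge_aux hS
    linarith
  rcases lt_or_ge d 6 with hsmall | hlarge
  · interval_cases d
    · norm_num at hx; subst hx; nlinarith [hππ, hπl, hπu]
    · norm_num at hx; subst hx; nlinarith [hππ, hπl, hπu]
    · norm_num at hx; subst hx; nlinarith [hππ, hπl, hπu]
    · norm_num at hx; subst hx; nlinarith [hππ, hπl, hπu]
  · -- large case d ≥ 6
    have hd6 : (6:ℝ) ≤ (d:ℝ) := by exact_mod_cast hlarge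
    have hdpos : (0:ℝ) < (d:ℝ) := by linarith
    have hd0 : d ≠ 0 := by omega
    have hx7 : x ≤ 1/7 := by
      rw [hx, div_le_div_iff₀ (by linarith) (by norm_num)]
      linarith
    -- exp(-1) < (1-x)^d
    have h1 : Real.exp (-(1/(d:ℝ))) < 1 - x := by
      have hlt : (1:ℝ)/(d:ℝ) + 1 < Real.exp (1/(d:ℝ)) :=
        Real.add_one_lt_exp (by positivity)
      have hA : (0:ℝ) < 1 - x := by linarith [hx3]
      rw [Real.exp_neg, inv_lt_comm₀ (Real.exp_pos _) hA]
      have : (1 - x)⁻¹ = 1/(d:ℝ) + 1 := by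
        rw [hx]; field_simp; rw [add_sub_cancel_right, mul_div_cancel_left₀ _ hdpos.ne']; ring
      rw [this]; exact hlt
    have hpow1 : Real.exp (-1) < (1-x)^d := by
      have heq : Real.exp (-(1/(d:ℝ)))^d = Real.exp (-1) := by
        rw [← Real.exp_nat_mul]
        congr 1
        field_simp
      calc Real.exp (-1) = Real.exp (-(1/(d:ℝ)))^d := heq.symm
        _ < (1-x)^d := by
            apply pow_lt_pow_left₀ h1 (Real.exp_pos _).le hd0
    -- (1-2x)^d ≥ (3/5) exp(-2)
    have hdm1 : (5:ℝ) ≤ (d:ℝ) - 1 := by linarith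
    have h2 : Real.exp (-(2/((d:ℝ)-1))) ≤ 1 - 2*x := by
      have hlt : (2:ℝ)/((d:ℝ)-1) + 1 ≤ Real.exp (2/((d:ℝ)-1)) :=
        Real.add_one_le_exp _
      have hA : (0:ℝ) < 1 - 2*x := by linarith
      have h1m : (1:ℝ) - 2*x = ((d:ℝ)-1)/((d:ℝ)+1) := by
        rw [hx]; field_simp; ring
      have hinv : (1 - 2*x)⁻¹ = 2/((d:ℝ)-1) + 1 := by
        rw [h1m, inv_div]
        field_simp
        ring
      rw [Real.exp_neg, inv_le_comm₀ (Real.exp_pos _) hA, hinv]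
      exact hlt
    have hpow2 : Real.exp (-2) * (3/5) ≤ (1-2*x)^d := by
      have hne0 : ((d:ℝ)-1) ≠ 0 := by linarith
      have hexp2 : (d:ℝ) * (-(2/((d:ℝ)-1))) = -(2*(d:ℝ)/((d:ℝ)-1)) := by
        field_simp
      have heq : Real.exp (-(2/((d:ℝ)-1)))^d = Real.exp (-(2*(d:ℝ)/((d:ℝ)-1))) := by
        rw [← Real.exp_nat_mul, hexp2]
      have hne : ((d:ℝ)-1) ≠ 0 := by linarith
      have hexp : -(2*(d:ℝ)/((d:ℝ)-1)) = (-2) + (-(2/((d:ℝ)-1))) := by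
        field_simp
        ring
      have hsplit : Real.exp (-(2*(d:ℝ)/((d:ℝ)-1)))
          = Real.exp (-2) * Real.exp (-(2/((d:ℝ)-1))) := by
        rw [hexp, Real.exp_add]
      have hlin : 1 - 2/((d:ℝ)-1) ≤ Real.exp (-(2/((d:ℝ)-1))) := by
        have := Real.add_one_le_exp (-(2/((d:ℝ)-1)))
        linarith
      have h35 : (3:ℝ)/5 ≤ 1 - 2/((d:ℝ)-1) := by
        have hq : 2/((d:ℝ)-1) ≤ 2/5 := by
          rw [div_le_div_iff₀ (by linarith : (0:ℝ) < (d:ℝ)-1) (by norm_num : (0:ℝ) < 5)]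
          linarith
        linarith
      have hE2 : (0:ℝ) < Real.exp (-2) := Real.exp_pos _
      calc Real.exp (-2) * (3/5) ≤ Real.exp (-2) * Real.exp (-(2/((d:ℝ)-1))) := by
            nlinarith
        _ = Real.exp (-(2*(d:ℝ)/((d:ℝ)-1))) := hsplit.symm
        _ = Real.exp (-(2/((d:ℝ)-1)))^d := heq.symm
        _ ≤ (1-2*x)^d := pow_le_pow_left₀ (Real.exp_pos _).le h2 d
    -- numeric bounds on exp
    have hprod : Real.exp 1 * Real.exp (-1) = 1 := by
      rw [← Real.exp_add]; norm_num
    have heu := Real.exp_one_lt_d9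
    have hE1pos : (0:ℝ) < Real.exp (-1) := Real.exp_pos _
    have eE1l : (0.3678794:ℝ) < Real.exp (-1) := by nlinarith
    have hE2sq : Real.exp (-2) = Real.exp (-1)^2 := by
      rw [sq, ← Real.exp_add]; norm_num
    have eE2l : (0.1353352:ℝ) < Real.exp (-2) := by rw [hE2sq]; nlinarith
    -- main numeric inequality
    have hkey : 4*(148/147:ℝ)^2*(1/7) + π*(148/147)*(1-(3/5)*Real.exp (-2))
        < Real.exp (-1) * π^2 := by
      have t1 : (0.1353352:ℝ)*π < Real.exp (-2) * π :=
        mul_lt_mul_of_pos_right eE2l hπ0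
      have t2 : (0.3678794:ℝ)*π^2 < Real.exp (-1) * π^2 := by nlinarith
      nlinarith [t1, t2, hππ, hπl, hπu]
    -- assemble
    have hc7 : x + x^3/3 ≤ (148/147)*x := by
      have hx2 : x^2 ≤ 1/49 := by nlinarith
      nlinarith [mul_le_mul_of_nonneg_left hx2 hx0.le]
    have hm2 : 1 - (1-2*x)^d ≤ 1 - (3/5)*Real.exp (-2) := by linarith
    have hm2pos : (0:ℝ) ≤ 1 - (3/5)*Real.exp (-2) := le_trans hm0 hm2
    have hc0 : (0:ℝ) < x + x^3/3 := by positivity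
    have sA : 4*(x+x^3/3)^2 ≤ 4*((148/147)*x)^2 := by nlinarith
    have sB : π*(x+x^3/3)*(1-(1-2*x)^d) ≤ π*((148/147)*x)*(1-(3/5)*Real.exp (-2)) := by
      have hmul : (x+x^3/3)*(1-(1-2*x)^d) ≤ ((148/147)*x)*(1-(3/5)*Real.exp (-2)) :=
        mul_le_mul hc7 hm2 hm0 (by positivity)
      nlinarith [mul_le_mul_of_nonneg_left hmul hπ0.le]
    have sC : 4*((148/147)*x)^2 + π*((148/147)*x)*(1-(3/5)*Real.exp (-2))
        ≤ (4*(148/147:ℝ)^2*(1/7) + π*(148/147)*(1-(3/5)*Real.exp (-2)))*x := by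
      have : 4*((148/147:ℝ))^2*x^2 ≤ 4*((148/147:ℝ))^2*(1/7)*x := by nlinarith
      nlinarith
    have sD : (4*(148/147:ℝ)^2*(1/7) + π*(148/147)*(1-(3/5)*Real.exp (-2)))*x
        < (Real.exp (-1) * π^2)*x := mul_lt_mul_of_pos_right hkey hx0
    have sE : (Real.exp (-1) * π^2)*x < (x*(1-x)^d)*π^2 := by
      have := mul_lt_mul_of_pos_left hpow1 (mul_pos hx0 (by positivity : (0:ℝ) < π^2))
      nlinarith [this]
    linarith
end
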